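/- Let 1 ≤ p < ∞, X a Banach space, and U, V: L_p → X bounded linear operators. If U and V are both hereditarily PP-narrow, then U + V is hereditarily PP-narrow. -/

import Mathlib

open MeasureTheory ENNReal Set Filter

noncomputable section

variable {Ω : Type*} [MeasurableSpace Ω]

/-- `f ∈ L_p(μ)` is a *sign supported on* `A`: `f = χ_{B₁} - χ_{B₂}` where `B₁, B₂`
form a partition of `A` into two measurable subsets of equal measure. -/
def IsSignOn (μ : Measure Ω) [IsFiniteMeasure μ] (p : ℝ≥0∞) [Fact (1 ≤ p)]
    (f : Lp ℝ p μ) (A : Set Ω) : Prop :=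
  ∃ (B₁ B₂ : Set Ω) (h₁ : MeasurableSet B₁) (h₂ : MeasurableSet B₂),
    Disjoint B₁ B₂ ∧ B₁ ∪ B₂ = A ∧ μ B₁ = μ B₂ ∧
    f = indicatorConstLp p h₁ (measure_ne_top μ B₁) (1 : ℝ) -
        indicatorConstLp p h₂ (measure_ne_top μ B₂) (1 : ℝ)

/-- `T : L_p(μ) → X` is *PP-narrow*: for every measurable `A` of nonzero measure and
every `ε > 0` there is a sign `f` supported on `A` with `‖T f‖ ≤ ε`. -/
def PPNarrow (μ : Measure Ω) [IsFiniteMeasure μ] (p : ℝ≥0∞) [Fact (1 ≤ p)]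
    {X : Type*} [NormedAddCommGroup X] [NormedSpace ℝ X]
    (T : Lp ℝ p μ →L[ℝ] X) : Prop :=
  ∀ A : Set Ω, MeasurableSet A → 0 < μ A →
    ∀ ε : ℝ, 0 < ε → ∃ f : Lp ℝ p μ, IsSignOn μ p f A ∧ ‖T f‖ ≤ ε

/-- `S` is a sub-σ-algebra (of the σ-algebra of `Ω`) consisting of subsets of `A`. -/
structure IsSubSigmaAlgebraOn (A : Set Ω) (S : Set (Set Ω)) : Prop where
  measurable : ∀ B ∈ S, MeasurableSet B
  subset : ∀ B ∈ S, B ⊆ A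
  top_mem : A ∈ S
  diff_mem : ∀ B ∈ S, A \ B ∈ S
  iUnion_mem : ∀ g : ℕ → Set Ω, (∀ n, g n ∈ S) → (⋃ n, g n) ∈ S

/-- `μ` is nonatomic on the family `S`: every member of positive measure has a member
subset of strictly smaller positive measure. -/
def NonatomicOn (μ : Measure Ω) (S : Set (Set Ω)) : Prop :=
  ∀ B ∈ S, 0 < μ B → ∃ C ∈ S, C ⊆ B ∧ 0 < μ C ∧ μ C < μ B

/-- `f` is a sign supported on `B` whose two halves belong to the family `S`. -/
def IsSignIn (μ : Measure Ω) [IsFiniteMeasure μ] (p : ℝ≥0∞) [Fact (1 ≤ p)]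
    (f : Lp ℝ p μ) (B : Set Ω) (S : Set (Set Ω)) : Prop :=
  ∃ B₁ ∈ S, ∃ B₂ ∈ S, ∃ (h₁ : MeasurableSet B₁) (h₂ : MeasurableSet B₂),
    Disjoint B₁ B₂ ∧ B₁ ∪ B₂ = B ∧ μ B₁ = μ B₂ ∧
    f = indicatorConstLp p h₁ (measure_ne_top μ B₁) (1 : ℝ) -
        indicatorConstLp p h₂ (measure_ne_top μ B₂) (1 : ℝ)

/-- `T : L_p(μ) → X` is *hereditarily PP-narrow*: for every `A` of nonzero measure
and every sub-σ-algebra `S` of subsets of `A` on which `μ` is nonatomic, the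
restriction of `T` to `L_p(A, S, μ)` is PP-narrow. -/
def HPPNarrow (μ : Measure Ω) [IsFiniteMeasure μ] (p : ℝ≥0∞) [Fact (1 ≤ p)]
    {X : Type*} [NormedAddCommGroup X] [NormedSpace ℝ X]
    (T : Lp ℝ p μ →L[ℝ] X) : Prop :=
  ∀ A : Set Ω, MeasurableSet A → 0 < μ A →
    ∀ S : Set (Set Ω), IsSubSigmaAlgebraOn A S → NonatomicOn μ S →
      ∀ B ∈ S, 0 < μ B → ∀ ε : ℝ, 0 < ε →
        ∃ f : Lp ℝ p μ, IsSignIn μ p f B S ∧ ‖T f‖ ≤ ε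


set_option linter.unusedSectionVars false
set_option maxHeartbeats 1000000

open Topology

section AuxNarrow

section AuxInd
variable (μ : Measure Ω) [IsFiniteMeasure μ] (p : ℝ≥0∞) [Fact (1 ≤ p)]

open Classical in
def auxInd (C : Set Ω) : Lp ℝ p μ :=
  if h : MeasurableSet C then indicatorConstLp p h (measure_ne_top μ C) (1 : ℝ) else 0

variable {μ p}

lemma auxInd_of_meas {C : Set Ω} (h : MeasurableSet C) :
    auxInd μ p C = indicatorConstLp p h (measure_ne_top μ C) (1 : ℝ) := by
  rw [auxInd, dif_pos h]

lemma auxInd_union {s t : Set Ω} (hs : MeasurableSet s) (ht : MeasurableSet t)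
    (hst : Disjoint s t) : auxInd μ p (s ∪ t) = auxInd μ p s + auxInd μ p t := by
  rw [auxInd_of_meas (hs.union ht), auxInd_of_meas hs, auxInd_of_meas ht]
  exact indicatorConstLp_disjoint_union hs ht _ _ hst 1

lemma norm_auxInd (hp0 : p ≠ 0) (hp : p ≠ ∞) {C : Set Ω} (h : MeasurableSet C) :
    ‖auxInd μ p C‖ = (μ C).toReal ^ (1 / p.toReal) := by
  rw [auxInd_of_meas h, norm_indicatorConstLp hp0 hp, norm_one, one_mul]
  rfl

lemma auxInd_sub {C E : Set Ω} (hC : MeasurableSet C) (hE : MeasurableSet E) :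
    auxInd μ p C - auxInd μ p E = auxInd μ p (C \ E) - auxInd μ p (E \ C) := by
  have h1 : auxInd μ p C = auxInd μ p (C \ E) + auxInd μ p (C ∩ E) := by
    rw [← auxInd_union (hC.diff hE) (hC.inter hE) disjoint_sdiff_inter,
      Set.diff_union_inter]
  have h2 : auxInd μ p E = auxInd μ p (E \ C) + auxInd μ p (C ∩ E) := by
    rw [Set.inter_comm C E,
      ← auxInd_union (hE.diff hC) (hE.inter hC) disjoint_sdiff_inter,
      Set.diff_union_inter]
  rw [h1, h2]; abel

lemma norm_auxInd_sub_le (hp0 : p ≠ 0) (hp : p ≠ ∞) {C E : Set Ω}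
    (hC : MeasurableSet C) (hE : MeasurableSet E) :
    ‖auxInd μ p C - auxInd μ p E‖ ≤ 2 * (μ (symmDiff C E)).toReal ^ (1 / p.toReal) := by
  rw [auxInd_sub hC hE]
  have hre : 0 < 1 / p.toReal := by
    apply div_pos one_pos
    exact ENNReal.toReal_pos hp0 hp
  have key : ∀ s : Set Ω, MeasurableSet s → s ⊆ symmDiff C E →
      ‖auxInd μ p s‖ ≤ (μ (symmDiff C E)).toReal ^ (1 / p.toReal) := by
    intro s hs hsub
    rw [norm_auxInd hp0 hp hs]
    apply Real.rpow_le_rpow ENNReal.toReal_nonneg _ hre.le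
    exact ENNReal.toReal_mono (measure_ne_top μ _) (measure_mono hsub)
  calc ‖auxInd μ p (C \ E) - auxInd μ p (E \ C)‖
      ≤ ‖auxInd μ p (C \ E)‖ + ‖auxInd μ p (E \ C)‖ := norm_sub_le _ _
    _ ≤ (μ (symmDiff C E)).toReal ^ (1 / p.toReal) + (μ (symmDiff C E)).toReal ^ (1 / p.toReal) := by
        gcongr
        · exact key _ (hC.diff hE) (by intro x hx; exact Or.inl hx)
        · exact key _ (hE.diff hC) (by intro x hx; exact Or.inr hx)
    _ = 2 * (μ (symmDiff C E)).toReal ^ (1 / p.toReal) := by ring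

end AuxInd

def auxLists : ℕ → Finset (List Bool)
  | 0 => {[]}
  | n+1 => (auxLists n).image (List.cons false) ∪ (auxLists n).image (List.cons true)

lemma mem_auxLists {n : ℕ} {w : List Bool} : w ∈ auxLists n ↔ w.length = n := by
  induction n generalizing w with
  | zero => simp [auxLists, List.length_eq_zero_iff]
  | succ n ih =>
    cases w with
    | nil => simp [auxLists]
    | cons b w' =>
      simp only [auxLists, Finset.mem_union, Finset.mem_image, List.length_cons,
        Nat.add_left_inj]
      constructor
      · rintro (⟨a, ha, h⟩ | ⟨a, ha, h⟩) <;>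
          (cases h; exact ih.mp ha)
      · intro h
        cases b
        · exact Or.inl ⟨w', ih.mpr h, rfl⟩
        · exact Or.inr ⟨w', ih.mpr h, rfl⟩

lemma card_auxLists (n : ℕ) : (auxLists n).card = 2 ^ n := by
  induction n with
  | zero => simp [auxLists]
  | succ n ih =>
    have hinj : ∀ b : Bool, Function.Injective (List.cons b) := by
      intro b x y h; cases h; rfl
    have hdisj : Disjoint ((auxLists n).image (List.cons false))
        ((auxLists n).image (List.cons true)) := by
      rw [Finset.disjoint_left]
      intro w hw hw'
      obtain ⟨a, -, rfl⟩ := Finset.mem_image.mp hw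
      obtain ⟨c, -, h⟩ := Finset.mem_image.mp hw'
      cases h
    rw [auxLists, Finset.card_union_of_disjoint hdisj,
      Finset.card_image_of_injective _ (hinj false),
      Finset.card_image_of_injective _ (hinj true), ih]
    ring


def buildTree (B : Set Ω) (g₀ g₁ : Set Ω → ℕ → Set Ω) : List Bool → Set Ω
  | [] => B
  | b :: w => (bif b then g₁ else g₀) (buildTree B g₀ g₁ w) w.length

section Tree
variable {t : List Bool → Set Ω}
variable (hunion : ∀ w, t (false :: w) ∪ t (true :: w) = t w)
variable (hdisj : ∀ w, Disjoint (t (false :: w)) (t (true :: w)))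
variable (hmeas : ∀ w, MeasurableSet (t w))
variable {μ : Measure Ω} [IsFiniteMeasure μ]
variable (heqm : ∀ w, μ (t (false :: w)) = μ (t (true :: w)))

include hunion in
lemma tree_child_subset (b : Bool) (w : List Bool) : t (b :: w) ⊆ t w := by
  rw [← hunion w]; cases b
  · exact subset_union_left
  · exact subset_union_right

include hunion in
lemma tree_append_subset (u w : List Bool) : t (u ++ w) ⊆ t w := by
  induction u with
  | nil => simp
  | cons b u ih => exact (tree_child_subset hunion b (u ++ w)).trans ih

include hunion hdisj in
lemma tree_disjoint : ∀ {w v : List Bool}, w.length = v.length → w ≠ v →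
    Disjoint (t w) (t v) := by
  intro w
  induction w with
  | nil => intro v hl hne; cases v with
    | nil => exact absurd rfl hne
    | cons c v => simp at hl
  | cons b w ih =>
    intro v hl hne
    cases v with
    | nil => simp at hl
    | cons c v =>
      simp only [List.length_cons, Nat.add_left_inj] at hl
      by_cases hwv : w = v
      · subst hwv
        have hbc : b ≠ c := fun h => hne (by rw [h])
        cases b <;> cases c <;> simp_all <;>
          first
          | exact hdisj w
          | exact (hdisj w).symm
      · exact ((ih hl hwv).mono (tree_child_subset hunion b w)
          (tree_child_subset hunion c v))

include hunion in
lemma tree_descend (m : ℕ) (w : List Bool) :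
    t w = ⋃ u ∈ (auxLists m : Finset (List Bool)), t (u ++ w) := by
  induction m with
  | zero => simp [auxLists]
  | succ m ih =>
    rw [ih]
    ext x
    simp only [mem_iUnion, exists_prop]
    constructor
    · rintro ⟨u, hu, hx⟩
      rw [← hunion (u ++ w)] at hx
      rcases hx with hx | hx
      · exact ⟨false :: u, by
          simp only [auxLists, Finset.mem_union, Finset.mem_image]
          exact Or.inl ⟨u, hu, rfl⟩, hx⟩
      · exact ⟨true :: u, by
          simp only [auxLists, Finset.mem_union, Finset.mem_image]
          exact Or.inr ⟨u, hu, rfl⟩, hx⟩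
    · rintro ⟨u, hu, hx⟩
      simp only [auxLists, Finset.mem_union, Finset.mem_image] at hu
      rcases hu with ⟨a, ha, rfl⟩ | ⟨a, ha, rfl⟩
      · exact ⟨a, ha, tree_child_subset hunion false (a ++ w) hx⟩
      · exact ⟨a, ha, tree_child_subset hunion true (a ++ w) hx⟩

include hunion hdisj in
lemma tree_compl {n : ℕ} {F : Finset (List Bool)} (hF : F ⊆ auxLists n) :
    t [] \ (⋃ w ∈ F, t w) = ⋃ w ∈ (auxLists n \ F : Finset (List Bool)), t w := by
  have hpart := tree_descend hunion n []
  simp only [List.append_nil] at hpart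
  ext x
  simp only [mem_diff, mem_iUnion, exists_prop, Finset.mem_sdiff]
  constructor
  · rintro ⟨hx, hnx⟩
    rw [hpart] at hx
    simp only [mem_iUnion, exists_prop] at hx
    obtain ⟨u, hu, hxu⟩ := hx
    exact ⟨u, ⟨hu, fun huF => hnx ⟨u, huF, hxu⟩⟩, hxu⟩
  · rintro ⟨u, ⟨hu, hunF⟩, hxu⟩
    constructor
    · rw [hpart]
      simp only [mem_iUnion, exists_prop]
      exact ⟨u, hu, hxu⟩
    · rintro ⟨v, hvF, hxv⟩
      have hne : u ≠ v := fun h => hunF (h ▸ hvF)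
      have hlen : u.length = v.length := by
        rw [mem_auxLists.mp hu, mem_auxLists.mp (hF hvF)]
      exact Set.disjoint_left.mp (tree_disjoint hunion hdisj hlen hne) hxu hxv


include hunion hdisj hmeas heqm in
lemma tree_measure_child (b : Bool) (w : List Bool) :
    μ (t (b :: w)) = μ (t w) * 2⁻¹ := by
  have hsum : μ (t (false :: w)) + μ (t (true :: w)) = μ (t w) := by
    rw [← measure_union (hdisj w) (hmeas _), hunion]
  rw [heqm w, ← two_mul] at hsum
  have h2 : μ (t (true :: w)) = μ (t w) * 2⁻¹ := by
    rw [← hsum]; rw [← mul_comm (μ (t (true :: w))) 2, mul_assoc,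
      ENNReal.mul_inv_cancel two_ne_zero ofNat_ne_top, mul_one]
  cases b
  · rw [heqm w, h2]
  · exact h2

include hunion hdisj hmeas heqm in
lemma tree_measure (w : List Bool) :
    μ (t w) = μ (t []) * 2⁻¹ ^ w.length := by
  induction w with
  | nil => simp
  | cons b w ih =>
    rw [tree_measure_child hunion hdisj hmeas heqm b w, ih, List.length_cons,
      pow_succ, mul_assoc]

include hunion hdisj hmeas heqm in
lemma tree_measure_pos (h0 : 0 < μ (t [])) (w : List Bool) : 0 < μ (t w) := by
  rw [tree_measure hunion hdisj hmeas heqm w]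
  exact ENNReal.mul_pos h0.ne' (pow_ne_zero _ (ENNReal.inv_ne_zero.mpr ofNat_ne_top))

include hunion hdisj hmeas heqm in
lemma tree_measure_toReal (w : List Bool) :
    (μ (t w)).toReal = (μ (t [])).toReal * (1/2 : ℝ) ^ w.length := by
  rw [tree_measure hunion hdisj hmeas heqm w, ENNReal.toReal_mul, ENNReal.toReal_pow]
  norm_num

include hunion hdisj hmeas in
lemma tree_measure_biUnion {n : ℕ} {F : Finset (List Bool)} (hF : F ⊆ auxLists n) :
    μ (⋃ w ∈ F, t w) = ∑ w ∈ F, μ (t w) := by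
  apply measure_biUnion_finset _ (fun w _ => hmeas w)
  intro u hu v hv huv
  exact tree_disjoint hunion hdisj
    (by rw [mem_auxLists.mp (hF hu), mem_auxLists.mp (hF hv)]) huv



lemma auxInd_empty {μ' : Measure Ω} [IsFiniteMeasure μ'] {p : ℝ≥0∞} [Fact (1 ≤ p)] :
    auxInd μ' p (∅ : Set Ω) = 0 := by
  rw [auxInd_of_meas MeasurableSet.empty]
  exact indicatorConstLp_empty

include hunion hdisj hmeas in
lemma tree_auxInd_biUnion {p : ℝ≥0∞} [Fact (1 ≤ p)]
    {n : ℕ} {F : Finset (List Bool)} (hF : F ⊆ auxLists n) :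
    auxInd μ p (⋃ w ∈ F, t w) = ∑ w ∈ F, auxInd μ p (t w) := by
  classical
  induction F using Finset.induction_on with
  | empty => simp [auxInd_empty]
  | @insert a F ha ih =>
    have hFsub : F ⊆ auxLists n := fun w hw => hF (Finset.mem_insert_of_mem hw)
    have hdj : Disjoint (t a) (⋃ w ∈ F, t w) := by
      rw [Set.disjoint_right]
      intro x hx hxa
      simp only [mem_iUnion, exists_prop] at hx
      obtain ⟨w, hwF, hxw⟩ := hx
      have hne : a ≠ w := fun h => ha (h ▸ hwF)
      have hlen : a.length = w.length := by
        rw [mem_auxLists.mp (hF (Finset.mem_insert_self a F)),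
          mem_auxLists.mp (hFsub hwF)]
      exact Set.disjoint_left.mp (tree_disjoint hunion hdisj hlen hne) hxa hxw
    rw [show (⋃ w ∈ (insert a F : Finset (List Bool)), t w) = t a ∪ ⋃ w ∈ F, t w by
        simp [Set.biUnion_insert],
      auxInd_union (hmeas a) (F.measurableSet_biUnion (fun w _ => hmeas w)) hdj,
      ih hFsub, Finset.sum_insert ha]



include hunion in
lemma tree_refine {n m : ℕ} {F : Finset (List Bool)} (hF : F ⊆ auxLists n) (hnm : n ≤ m) :
    ∃ F' : Finset (List Bool), F' ⊆ auxLists m ∧ (⋃ w ∈ F', t w) = ⋃ w ∈ F, t w := by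
  classical
  refine ⟨F.biUnion (fun w => (auxLists (m - n)).image (fun u => u ++ w)), ?_, ?_⟩
  · intro v hv
    simp only [Finset.mem_biUnion, Finset.mem_image] at hv
    obtain ⟨w, hw, u, hu, rfl⟩ := hv
    rw [mem_auxLists, List.length_append, mem_auxLists.mp hu, mem_auxLists.mp (hF hw)]
    omega
  · rw [Finset.set_biUnion_biUnion]
    apply Set.iUnion₂_congr
    intro w hw
    rw [Finset.set_biUnion_finset_image]
    exact (tree_descend hunion (m - n) w).symm

include hunion hdisj hmeas in
lemma tree_approx {C : Set Ω}
    (hC : MeasurableSet[MeasurableSpace.generateFrom (Set.range t)] C) :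
    ∀ δ : ℝ≥0∞, 0 < δ → ∃ n : ℕ, ∃ F : Finset (List Bool), F ⊆ auxLists n ∧
      μ (symmDiff (C ∩ t []) (⋃ w ∈ F, t w)) ≤ δ := by
  classical
  have hle : MeasurableSpace.generateFrom (Set.range t) ≤ ‹MeasurableSpace Ω› :=
    MeasurableSpace.generateFrom_le (by rintro s ⟨w, rfl⟩; exact hmeas w)
  refine MeasurableSpace.generateFrom_induction
    (p := fun s (_ : MeasurableSet[MeasurableSpace.generateFrom (Set.range t)] s) =>
      ∀ δ : ℝ≥0∞, 0 < δ → ∃ n : ℕ, ∃ F : Finset (List Bool), F ⊆ auxLists n ∧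
        μ (symmDiff (s ∩ t []) (⋃ w ∈ F, t w)) ≤ δ)
    (Set.range t) ?_ ?_ ?_ ?_ C hC
  · -- generators
    rintro s ⟨w, rfl⟩ - δ hδ
    refine ⟨w.length, {w}, by simp [mem_auxLists], ?_⟩
    have hsub : t w ⊆ t [] := by
      have := tree_append_subset hunion w []
      simpa using this
    rw [Set.inter_eq_left.mpr hsub]
    simp [symmDiff_self]
  · -- empty
    intro δ hδ
    exact ⟨0, ∅, by simp, by simp [symmDiff_self]⟩
  · -- compl
    intro s hgen ih δ hδ
    obtain ⟨n, F, hF, hle'⟩ := ih δ hδ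
    refine ⟨n, auxLists n \ F, Finset.sdiff_subset, ?_⟩
    rw [← tree_compl hunion hdisj hF]
    refine le_trans (measure_mono ?_) hle'
    have h1 : sᶜ ∩ t [] = t [] \ (s ∩ t []) := by ext x; simp [mem_diff]; tauto
    rw [h1]
    intro x hx
    have hE : (⋃ w ∈ F, t w) ⊆ t [] := by
      intro y hy
      simp only [mem_iUnion, exists_prop] at hy
      obtain ⟨w, hwF, hyw⟩ := hy
      have : t w ⊆ t [] := by simpa using tree_append_subset hunion w []
      exact this hyw
    rcases hx with ⟨hx1, hx2⟩ | ⟨hx1, hx2⟩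
    · -- x ∈ t[] \ (s ∩ t[]), x ∉ t[] \ E
      have hxE : x ∈ ⋃ w ∈ F, t w := by
        by_contra hxE
        exact hx2 ⟨hx1.1, hxE⟩
      exact Or.inr ⟨hxE, hx1.2⟩
    · -- x ∈ t[] \ E, x ∉ t[] \ (s ∩ t[])
      have hxs : x ∈ s ∩ t [] := by
        by_contra hxs
        exact hx2 ⟨hx1.1, hxs⟩
      exact Or.inl ⟨hxs, hx1.2⟩
  · -- iUnion
    intro seq hgenseq ih δ hδ
    set g : ℕ → Set Ω := fun k => seq k ∩ t [] with hg
    have hambg : ∀ k, MeasurableSet (g k) := fun k => ((hle _ (hgenseq k)).inter (hmeas []))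
    set T : Set Ω := ⋃ k, g k with hT
    have hTmeas : MeasurableSet T := MeasurableSet.iUnion hambg
    have h2pos : 0 < δ / 2 := ENNReal.div_pos hδ.ne' ofNat_ne_top
    -- find N with μ (T \ accumulate g N) < δ/2
    have htend : Tendsto (fun N => μ (T \ accumulate g N)) atTop (𝓝 0) := by
      have hiInter : (⋂ N, T \ accumulate g N) = ∅ := by
        rw [← Set.diff_iUnion, iUnion_accumulate, ← hT, Set.diff_self]
      have := tendsto_measure_iInter_atTop (μ := μ)
        (s := fun N => T \ accumulate g N)
        (fun N => (hTmeas.diff (by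
          rw [Set.accumulate_def]
          exact MeasurableSet.biUnion (Set.to_countable _)
            (fun i _ => hambg i))).nullMeasurableSet) ?_ ⟨0, measure_ne_top μ _⟩
      · rw [hiInter] at this; simpa [Function.comp_def] using this
      · intro a b hab
        exact Set.diff_subset_diff_right (by
          intro x hx
          rw [Set.mem_accumulate] at hx ⊢
          obtain ⟨y, hy, hxy⟩ := hx
          exact ⟨y, hy.trans hab, hxy⟩)
    obtain ⟨N, hN⟩ := (htend.eventually_lt_const h2pos).exists
    -- approximate each g k, k ≤ N
    set K : ℝ≥0∞ := ((N + 1 : ℕ) : ℝ≥0∞) with hK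
    have hKnetop : K ≠ ∞ := by simp [hK]
    set δ' : ℝ≥0∞ := δ / (2 * K) with hδ'
    have hδ'pos : 0 < δ' := ENNReal.div_pos hδ.ne'
      (ENNReal.mul_ne_top ofNat_ne_top hKnetop)
    choose nn FF hFF happ using fun k => ih k δ' hδ'pos
    set M : ℕ := (Finset.range (N + 1)).sup nn with hM
    have hrefine : ∀ k ∈ Finset.range (N + 1), ∃ F' : Finset (List Bool),
        F' ⊆ auxLists M ∧ (⋃ w ∈ F', t w) = ⋃ w ∈ FF k, t w := by
      intro k hk
      exact tree_refine hunion (hFF k) (Finset.le_sup hk)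
    choose! FF' hFF' hFFeq using hrefine
    refine ⟨M, (Finset.range (N + 1)).biUnion FF', ?_, ?_⟩
    · intro v hv
      simp only [Finset.mem_biUnion] at hv
      obtain ⟨k, hk, hvk⟩ := hv
      exact hFF' k hk hvk
    · have hW : (⋃ w ∈ (Finset.range (N + 1)).biUnion FF', t w) =
          ⋃ k ∈ Finset.range (N + 1), ⋃ w ∈ FF k, t w := by
        rw [Finset.set_biUnion_biUnion]
        exact Set.iUnion₂_congr (fun k hk => hFFeq k hk)
      rw [hW]
      have htarget : (⋃ k, seq k) ∩ t [] = T := by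
        rw [hT, hg, Set.iUnion_inter]
      rw [htarget]
      set W := ⋃ k ∈ Finset.range (N + 1), ⋃ w ∈ FF k, t w with hWdef
      have hsub : symmDiff T W ⊆ (T \ accumulate g N) ∪
          ⋃ k ∈ Finset.range (N + 1), symmDiff (g k) (⋃ w ∈ FF k, t w) := by
        intro x hx
        rcases hx with ⟨hxT, hxW⟩ | ⟨hxW, hxT⟩
        · by_cases hxA : x ∈ accumulate g N
          · rw [Set.mem_accumulate] at hxA
            obtain ⟨k, hk, hxk⟩ := hxA
            refine Or.inr (Set.mem_biUnion (Finset.mem_range.mpr (by omega))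
              (Or.inl ⟨hxk, fun hxE => hxW ?_⟩))
            rw [hWdef]
            exact Set.mem_biUnion (Finset.mem_range.mpr (by omega)) hxE
          · exact Or.inl ⟨hxT, hxA⟩
        · rw [hWdef] at hxW
          rw [Set.mem_iUnion₂] at hxW
          obtain ⟨k, hk, hxk⟩ := hxW
          exact Or.inr (Set.mem_biUnion hk
            (Or.inr ⟨hxk, fun hxg => hxT (Set.mem_iUnion.mpr ⟨k, hxg⟩)⟩))
      calc μ (symmDiff T W) ≤ μ ((T \ accumulate g N) ∪
          ⋃ k ∈ Finset.range (N + 1), symmDiff (g k) (⋃ w ∈ FF k, t w)) :=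
            measure_mono hsub
        _ ≤ μ (T \ accumulate g N) +
            ∑ k ∈ Finset.range (N + 1), μ (symmDiff (g k) (⋃ w ∈ FF k, t w)) :=
            le_trans (measure_union_le _ _) (by
              gcongr
              exact measure_biUnion_finset_le _ _)
        _ ≤ δ / 2 + δ / 2 := by
            refine add_le_add hN.le ?_
            calc ∑ k ∈ Finset.range (N + 1), μ (symmDiff (g k) (⋃ w ∈ FF k, t w))
                  ≤ (Finset.range (N + 1)).card • δ' :=
                    Finset.sum_le_card_nsmul _ _ _ (fun k _ => happ k)
                _ = K * δ' := by
                    rw [Finset.card_range, nsmul_eq_mul, hK]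
                _ ≤ δ / 2 := by
                    have h1 : δ' = δ / 2 * K⁻¹ := by
                      rw [hδ', div_eq_mul_inv, div_eq_mul_inv,
                        ENNReal.mul_inv (Or.inl two_ne_zero) (Or.inl ofNat_ne_top),
                        mul_assoc]
                    rw [h1]
                    calc K * (δ / 2 * K⁻¹) = δ / 2 * (K * K⁻¹) := by ring
                      _ ≤ δ / 2 * 1 := by
                          gcongr
                          exact ENNReal.mul_inv_le_one _
                      _ = δ / 2 := mul_one _
        _ = δ := ENNReal.add_halves δ


section Phi
variable {p : ℝ≥0∞} [Fact (1 ≤ p)]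
variable {X : Type*} [NormedAddCommGroup X] [NormedSpace ℝ X]
variable (U : Lp ℝ p μ →L[ℝ] X) {ε' : ℝ} (hε' : 0 < ε')
variable (hsmall : ∀ w : List Bool,
    ‖U (auxInd μ p (t (false :: w)) - auxInd μ p (t (true :: w)))‖ ≤
      ε' * (1/4 : ℝ) ^ w.length / 2)

include hunion hdisj hmeas heqm hsmall hε' in
lemma phi_node (w : List Bool) :
    ‖U (auxInd μ p (t w)) - ((1/2 : ℝ) ^ w.length) • U (auxInd μ p (t []))‖ ≤
      ε' * ((1/2 : ℝ) ^ w.length - (1/4 : ℝ) ^ w.length) := by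
  induction w with
  | nil => simp
  | cons b w ih =>
    set n := w.length with hn
    have hsum : auxInd μ p (t w) =
        auxInd μ p (t (false :: w)) + auxInd μ p (t (true :: w)) := by
      rw [← hunion w, auxInd_union (hmeas _) (hmeas _) (hdisj w)]
    obtain ⟨cb, hcbabs, hrec⟩ : ∃ cb : ℝ, |cb| = 2⁻¹ ∧
        auxInd μ p (t (b :: w)) = (2⁻¹ : ℝ) • auxInd μ p (t w) +
          cb • (auxInd μ p (t (false :: w)) - auxInd μ p (t (true :: w))) := by
      cases b
      · exact ⟨2⁻¹, by norm_num, by rw [hsum]; module⟩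
      · exact ⟨-2⁻¹, by norm_num, by rw [hsum]; module⟩
    have hkey : U (auxInd μ p (t (b :: w))) -
        ((1/2 : ℝ) ^ (b :: w).length) • U (auxInd μ p (t [])) =
        (2⁻¹ : ℝ) • (U (auxInd μ p (t w)) - ((1/2 : ℝ) ^ n) • U (auxInd μ p (t []))) +
        cb • U (auxInd μ p (t (false :: w)) - auxInd μ p (t (true :: w))) := by
      rw [hrec, map_add, U.map_smul, U.map_smul, List.length_cons]
      have hpow : ((1:ℝ)/2) ^ (n + 1) = 2⁻¹ * ((1:ℝ)/2) ^ n := by ring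
      rw [hpow]
      module
    rw [hkey]
    calc ‖(2⁻¹ : ℝ) • (U (auxInd μ p (t w)) - ((1/2 : ℝ) ^ n) • U (auxInd μ p (t []))) +
        cb • U (auxInd μ p (t (false :: w)) - auxInd μ p (t (true :: w)))‖
        ≤ ‖(2⁻¹ : ℝ) • (U (auxInd μ p (t w)) - ((1/2 : ℝ) ^ n) • U (auxInd μ p (t [])))‖ +
          ‖cb • U (auxInd μ p (t (false :: w)) - auxInd μ p (t (true :: w)))‖ :=
          norm_add_le _ _
      _ = 2⁻¹ * ‖U (auxInd μ p (t w)) - ((1/2 : ℝ) ^ n) • U (auxInd μ p (t []))‖ +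
          2⁻¹ * ‖U (auxInd μ p (t (false :: w)) - auxInd μ p (t (true :: w)))‖ := by
          simp only [norm_smul, Real.norm_eq_abs, hcbabs]
          norm_num
      _ ≤ 2⁻¹ * (ε' * ((1/2 : ℝ) ^ n - (1/4 : ℝ) ^ n)) +
          2⁻¹ * (ε' * (1/4 : ℝ) ^ n / 2) :=
          add_le_add (mul_le_mul_of_nonneg_left ih (by norm_num))
            (mul_le_mul_of_nonneg_left (hsmall w) (by norm_num))
      _ = ε' * ((1/2 : ℝ) ^ (b :: w).length - (1/4 : ℝ) ^ (b :: w).length) := by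
          rw [List.length_cons]; ring

include hunion hdisj hmeas heqm hsmall hε' in
lemma phi_finset (hB0 : (μ (t [])).toReal ≠ 0) {n : ℕ} {F : Finset (List Bool)}
    (hF : F ⊆ auxLists n) :
    ‖U (auxInd μ p (⋃ w ∈ F, t w)) -
      ((μ (⋃ w ∈ F, t w)).toReal / (μ (t [])).toReal) • U (auxInd μ p (t []))‖ ≤ ε' := by
  have hratio : (μ (⋃ w ∈ F, t w)).toReal / (μ (t [])).toReal =
      ∑ w ∈ F, (1/2 : ℝ) ^ n := by
    rw [tree_measure_biUnion hunion hdisj hmeas hF,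
      ENNReal.toReal_sum (fun w _ => measure_ne_top μ _), Finset.sum_div]
    refine Finset.sum_congr rfl (fun w hw => ?_)
    rw [tree_measure_toReal hunion hdisj hmeas heqm w, mem_auxLists.mp (hF hw)]
    field_simp
  rw [tree_auxInd_biUnion hunion hdisj hmeas hF, hratio, map_sum,
    Finset.sum_smul, ← Finset.sum_sub_distrib]
  calc ‖∑ w ∈ F, (U (auxInd μ p (t w)) - ((1/2:ℝ) ^ n) • U (auxInd μ p (t [])))‖
      ≤ ∑ w ∈ F, ‖U (auxInd μ p (t w)) - ((1/2:ℝ) ^ n) • U (auxInd μ p (t []))‖ :=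
        norm_sum_le _ _
    _ ≤ ∑ w ∈ F, ε' * ((1/2 : ℝ) ^ n - (1/4 : ℝ) ^ n) := by
        refine Finset.sum_le_sum (fun w hw => ?_)
        have := phi_node hunion hdisj hmeas heqm U hε' hsmall w
        rwa [mem_auxLists.mp (hF hw)] at this
    _ = F.card * (ε' * ((1/2 : ℝ) ^ n - (1/4 : ℝ) ^ n)) := by
        rw [Finset.sum_const, nsmul_eq_mul]
    _ ≤ (2 : ℝ) ^ n * (ε' * ((1/2 : ℝ) ^ n - (1/4 : ℝ) ^ n)) := by
        have hcard : (F.card : ℝ) ≤ (2 : ℝ) ^ n := by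
          have := Finset.card_le_card hF
          rw [card_auxLists] at this
          exact_mod_cast this
        have hnonneg : 0 ≤ ε' * ((1/2 : ℝ) ^ n - (1/4 : ℝ) ^ n) := by
          apply mul_nonneg hε'.le
          have : (1/4 : ℝ) ^ n ≤ (1/2 : ℝ) ^ n := by
            apply pow_le_pow_left₀ (by norm_num) (by norm_num)
          linarith
        exact mul_le_mul_of_nonneg_right hcard hnonneg
    _ ≤ ε' := by
        have h1 : (2 : ℝ) ^ n * (1/2 : ℝ) ^ n = 1 := by
          rw [← mul_pow]; norm_num
        have h2 : (0:ℝ) ≤ (2:ℝ)^n * (1/4:ℝ)^n := by positivity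
        nlinarith [hε'.le]

include hunion hdisj hmeas heqm hsmall hε' in
lemma phi_general (hp0 : p ≠ 0) (hp : p ≠ ∞) (hB0 : 0 < μ (t []))
    {C : Set Ω} (hCgen : MeasurableSet[MeasurableSpace.generateFrom (Set.range t)] C)
    (hCB : C ⊆ t []) :
    ‖U (auxInd μ p C) - ((μ C).toReal / (μ (t [])).toReal) • U (auxInd μ p (t []))‖ ≤ ε' := by
  have hle : MeasurableSpace.generateFrom (Set.range t) ≤ ‹MeasurableSpace Ω› :=
    MeasurableSpace.generateFrom_le (by rintro s ⟨w, rfl⟩; exact hmeas w)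
  have hCmeas : MeasurableSet C := hle _ hCgen
  have hBr : (μ (t [])).toReal ≠ 0 :=
    (ENNReal.toReal_pos hB0.ne' (measure_ne_top μ _)).ne'
  -- approximating sequence
  have hexists : ∀ m : ℕ, ∃ E : Set Ω, MeasurableSet E ∧
      μ (symmDiff C E) ≤ (1 : ℝ≥0∞) / (m + 1) ∧
      ‖U (auxInd μ p E) - ((μ E).toReal / (μ (t [])).toReal) • U (auxInd μ p (t []))‖ ≤ ε' := by
    intro m
    obtain ⟨n, F, hF, happ⟩ := tree_approx (μ := μ) hunion hdisj hmeas hCgen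
      ((1 : ℝ≥0∞) / (m + 1)) (ENNReal.div_pos one_ne_zero (by simp))
    rw [Set.inter_eq_left.mpr hCB] at happ
    exact ⟨⋃ w ∈ F, t w, F.measurableSet_biUnion (fun w _ => hmeas w), happ,
      phi_finset hunion hdisj hmeas heqm U hε' hsmall hBr hF⟩
  choose E hEmeas hEapp hEbound using hexists
  -- convergence of measures of symmetric differences
  have hsd : Tendsto (fun m => (μ (symmDiff C (E m))).toReal) atTop (𝓝 0) := by
    apply squeeze_zero (fun m => ENNReal.toReal_nonneg)
    · intro m
      exact ENNReal.toReal_mono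
        ((ENNReal.div_lt_top one_ne_top (by simp)).ne) (hEapp m)
    · have heq : ∀ m : ℕ, ((1 : ℝ≥0∞) / (m + 1)).toReal = 1 / (m + 1 : ℝ) := by
        intro m
        rw [ENNReal.toReal_div, ENNReal.toReal_add (ENNReal.natCast_ne_top m)
          ENNReal.one_ne_top]
        simp
      simp_rw [heq]
      exact tendsto_one_div_add_atTop_nhds_zero_nat
  -- Lp convergence
  have hLp : Tendsto (fun m => auxInd μ p (E m)) atTop (𝓝 (auxInd μ p C)) := by
    rw [← tendsto_sub_nhds_zero_iff]
    refine squeeze_zero_norm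
      (a := fun m => 2 * (μ (symmDiff C (E m))).toReal ^ (1 / p.toReal)) (fun m => ?_) ?_
    · have := norm_auxInd_sub_le (μ := μ) (p := p) hp0 hp (hEmeas m) hCmeas
      rw [symmDiff_comm] at this
      exact this
    · have hre : 0 < 1 / p.toReal := div_pos one_pos (ENNReal.toReal_pos hp0 hp)
      have hcont : Tendsto (fun x : ℝ => x ^ (1 / p.toReal)) (𝓝 0) (𝓝 0) := by
        have h := (Real.continuousAt_rpow_const 0 (1 / p.toReal) (Or.inr hre.le))
        have h0 : (0:ℝ) ^ (1 / p.toReal) = 0 := Real.zero_rpow hre.ne'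
        rw [ContinuousAt, h0] at h
        exact h
      have := (hcont.comp hsd).const_mul (2 : ℝ)
      simpa using this
  -- convergence of scalars
  have hμconv : Tendsto (fun m => (μ (E m)).toReal) atTop (𝓝 (μ C).toReal) := by
    rw [← tendsto_sub_nhds_zero_iff]
    refine squeeze_zero_norm (a := fun m => (μ (symmDiff C (E m))).toReal)
      (fun m => ?_) hsd
    · have h1 : μ (E m) ≤ μ C + μ (symmDiff C (E m)) := by
        refine le_trans (measure_mono ?_) (measure_union_le _ _)
        intro x hx
        by_cases hxC : x ∈ C
        · exact Or.inl hxC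
        · exact Or.inr (Or.inr ⟨hx, hxC⟩)
      have h2 : μ C ≤ μ (E m) + μ (symmDiff C (E m)) := by
        refine le_trans (measure_mono ?_) (measure_union_le _ _)
        intro x hx
        by_cases hxE : x ∈ E m
        · exact Or.inl hxE
        · exact Or.inr (Or.inl ⟨hx, hxE⟩)
      have h1' := ENNReal.toReal_mono (by
        exact ENNReal.add_ne_top.mpr ⟨measure_ne_top μ _, measure_ne_top μ _⟩) h1
      have h2' := ENNReal.toReal_mono (by
        exact ENNReal.add_ne_top.mpr ⟨measure_ne_top μ _, measure_ne_top μ _⟩) h2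
      rw [ENNReal.toReal_add (measure_ne_top μ _) (measure_ne_top μ _)] at h1' h2'
      rw [Real.norm_eq_abs, abs_le]
      constructor <;> linarith
  have hscal : Tendsto (fun m => (μ (E m)).toReal / (μ (t [])).toReal) atTop
      (𝓝 ((μ C).toReal / (μ (t [])).toReal)) := hμconv.div_const _
  have hphi : Tendsto (fun m => U (auxInd μ p (E m)) -
      ((μ (E m)).toReal / (μ (t [])).toReal) • U (auxInd μ p (t []))) atTop
      (𝓝 (U (auxInd μ p C) - ((μ C).toReal / (μ (t [])).toReal) • U (auxInd μ p (t [])))) := by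
    exact ((U.continuous.tendsto _).comp hLp).sub (hscal.smul_const _)
  exact le_of_tendsto' hphi.norm (fun m => hEbound m)

end Phi
end Tree
end AuxNarrow

/-- Proposition 2.5(b). If `U, V : L_p(μ) → X` are both hereditarily
PP-narrow, then `U + V` is hereditarily PP-narrow. -/
theorem hppNarrow_add_hppNarrow
    (μ : Measure Ω) [IsProbabilityMeasure μ] [NullSingletonClass μ]
    (p : ℝ≥0∞) [Fact (1 ≤ p)] (hp : p ≠ ∞)
    {X : Type*} [NormedAddCommGroup X] [NormedSpace ℝ X] [CompleteSpace X]
    (U V : Lp ℝ p μ →L[ℝ] X) (hU : HPPNarrow μ p U) (hV : HPPNarrow μ p V) :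
    HPPNarrow μ p (U + V) := by
  classical
  intro A hA hμA S hS hSna B hBS hμB ε hε
  have hp0 : p ≠ 0 := by
    have h1 : (1 : ℝ≥0∞) ≤ p := Fact.out
    intro h
    rw [h] at h1
    simp at h1
  -- closure properties of S
  have hemptyS : (∅ : Set Ω) ∈ S := by
    have := hS.diff_mem A hS.top_mem
    simpa using this
  have hunionS : ∀ {C D : Set Ω}, C ∈ S → D ∈ S → C ∪ D ∈ S := by
    intro C D hC hD
    have h := hS.iUnion_mem (fun n => if n = 0 then C else D) (by
      intro n; by_cases h : n = 0 <;> simp [h, hC, hD])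
    have heq : (⋃ n : ℕ, if n = 0 then C else D) = C ∪ D := by
      ext x
      simp only [mem_iUnion, mem_union]
      constructor
      · rintro ⟨n, hn⟩
        by_cases h : n = 0
        · rw [if_pos h] at hn; exact Or.inl hn
        · rw [if_neg h] at hn; exact Or.inr hn
      · rintro (h | h)
        · exact ⟨0, by simp [h]⟩
        · exact ⟨1, by simp [h]⟩
    rwa [heq] at h
  have hinterS : ∀ {C D : Set Ω}, C ∈ S → D ∈ S → C ∩ D ∈ S := by
    intro C D hC hD
    have h := hS.diff_mem _ (hunionS (hS.diff_mem C hC) (hS.diff_mem D hD))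
    have heq : A \ ((A \ C) ∪ (A \ D)) = C ∩ D := by
      have hCA := hS.subset C hC
      have hDA := hS.subset D hD
      ext x
      simp only [mem_diff, mem_union, mem_inter_iff]
      constructor
      · rintro ⟨hxA, hn⟩
        push_neg at hn
        exact ⟨by tauto, by tauto⟩
      · rintro ⟨hxC, hxD⟩
        refine ⟨hCA hxC, ?_⟩
        push_neg
        exact ⟨fun _ => hxC, fun _ => hxD⟩
    rwa [heq] at h
  have hdiffS : ∀ {C D : Set Ω}, C ∈ S → D ∈ S → C \ D ∈ S := by
    intro C D hC hD
    have h := hinterS hC (hS.diff_mem D hD)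
    have heq : C ∩ (A \ D) = C \ D := by
      have hCA := hS.subset C hC
      ext x
      simp only [mem_inter_iff, mem_diff]
      constructor
      · rintro ⟨h1, _, h3⟩; exact ⟨h1, h3⟩
      · rintro ⟨h1, h2⟩; exact ⟨h1, hCA h1, h2⟩
    rwa [heq] at h
  -- split chooser from hU
  set ε' : ℝ := ε / 4 with hε'def
  have hε'pos : 0 < ε' := by positivity
  have hsplit0 : ∀ (N : Set Ω) (k : ℕ), ∃ N₀ N₁ : Set Ω, N ∈ S → 0 < μ N →
      N₀ ∈ S ∧ N₁ ∈ S ∧ Disjoint N₀ N₁ ∧ N₀ ∪ N₁ = N ∧ μ N₀ = μ N₁ ∧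
        ‖U (auxInd μ p N₀ - auxInd μ p N₁)‖ ≤ ε' * (1/4 : ℝ) ^ k / 2 := by
    intro N k
    by_cases h : N ∈ S ∧ 0 < μ N
    · obtain ⟨f, hsign, hUf⟩ := hU A hA hμA S hS hSna N h.1 h.2
        (ε' * (1/4 : ℝ) ^ k / 2) (by positivity)
      obtain ⟨N₀, hN₀, N₁, hN₁, h₁, h₂, hdj, hun, heqμ, hfeq⟩ := hsign
      refine ⟨N₀, N₁, fun _ _ => ⟨hN₀, hN₁, hdj, hun, heqμ, ?_⟩⟩
      rw [auxInd_of_meas h₁, auxInd_of_meas h₂, ← hfeq]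
      exact hUf
    · exact ⟨∅, ∅, fun h1 h2 => absurd ⟨h1, h2⟩ h⟩
  choose g₀ g₁ hsplit using hsplit0
  set t : List Bool → Set Ω := buildTree B g₀ g₁ with ht
  have htnil : t [] = B := rfl
  have hmemS : ∀ w : List Bool, t w ∈ S ∧ 0 < μ (t w) := by
    intro w
    induction w with
    | nil => exact ⟨hBS, hμB⟩
    | cons b w ih =>
      obtain ⟨h0, h1, hdj, hun, heqμ, _⟩ := hsplit (t w) w.length ih.1 ih.2
      have hpos : 0 < μ (g₀ (t w) w.length) := by
        by_contra hneg
        push_neg at hneg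
        have h0' : μ (g₀ (t w) w.length) = 0 := le_antisymm hneg zero_le
        have hz : μ (t w) = 0 := by
          conv_lhs => rw [← hun]
          refine le_antisymm ?_ zero_le
          calc μ (g₀ (t w) w.length ∪ g₁ (t w) w.length)
              ≤ μ (g₀ (t w) w.length) + μ (g₁ (t w) w.length) := measure_union_le _ _
            _ = 0 := by rw [h0', ← heqμ, h0', add_zero]
        exact absurd hz ih.2.ne'
      cases b
      · exact ⟨h0, hpos⟩
      · refine ⟨h1, ?_⟩
        show 0 < μ (g₁ (t w) w.length)
        rwa [← heqμ]
  have hprops := fun w : List Bool => hsplit (t w) w.length (hmemS w).1 (hmemS w).2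
  have hmeasT : ∀ w : List Bool, MeasurableSet (t w) := fun w =>
    hS.measurable _ (hmemS w).1
  have hunionT : ∀ w : List Bool, t (false :: w) ∪ t (true :: w) = t w := fun w =>
    (hprops w).2.2.2.1
  have hdisjT : ∀ w : List Bool, Disjoint (t (false :: w)) (t (true :: w)) := fun w =>
    (hprops w).2.2.1
  have heqmT : ∀ w : List Bool, μ (t (false :: w)) = μ (t (true :: w)) := fun w =>
    (hprops w).2.2.2.2.1
  have hsmallT : ∀ w : List Bool,
      ‖U (auxInd μ p (t (false :: w)) - auxInd μ p (t (true :: w)))‖ ≤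
        ε' * (1/4 : ℝ) ^ w.length / 2 := fun w => (hprops w).2.2.2.2.2
  -- the generated σ-algebra on B
  set G : Set (Set Ω) :=
    {C | C ⊆ B ∧ MeasurableSet[MeasurableSpace.generateFrom (Set.range t)] C} with hGdef
  have htw_subB : ∀ w : List Bool, t w ⊆ B := by
    intro w
    have h := tree_append_subset hunionT w []
    rw [List.append_nil] at h
    rwa [htnil] at h
  have htw_gen : ∀ w : List Bool,
      MeasurableSet[MeasurableSpace.generateFrom (Set.range t)] (t w) := fun w =>
    MeasurableSpace.measurableSet_generateFrom ⟨w, rfl⟩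
  -- G is contained in S
  have hm' : ∀ C ∈ G, C ∈ S := by
    intro C hC
    let m' : MeasurableSpace Ω :=
      { MeasurableSet' := fun D => D ∩ B ∈ S
        measurableSet_empty := by simpa using hemptyS
        measurableSet_compl := by
          intro D hD
          have heq : Dᶜ ∩ B = B \ (D ∩ B) := by
            ext x
            simp only [mem_inter_iff, mem_compl_iff, mem_diff]
            tauto
          show Dᶜ ∩ B ∈ S
          rw [heq]
          exact hdiffS hBS hD
        measurableSet_iUnion := by
          intro f hf
          show (⋃ n, f n) ∩ B ∈ S
          rw [Set.iUnion_inter]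
          exact hS.iUnion_mem _ hf }
    have hle' : MeasurableSpace.generateFrom (Set.range t) ≤ m' :=
      MeasurableSpace.generateFrom_le (by
      rintro s ⟨w, rfl⟩
      show t w ∩ B ∈ S
      rw [Set.inter_eq_left.mpr (htw_subB w)]
      exact (hmemS w).1)
    have hCB : C ∩ B ∈ S := hle' _ hC.2
    rwa [Set.inter_eq_left.mpr hC.1] at hCB
  have hGalg : IsSubSigmaAlgebraOn B G := by
    refine ⟨?_, ?_, ?_, ?_, ?_⟩
    · intro C hC; exact hS.measurable _ (hm' C hC)
    · intro C hC; exact hC.1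
    · exact ⟨subset_rfl, by rw [← htnil]; exact htw_gen []⟩
    · intro C hC
      exact ⟨diff_subset, MeasurableSet.diff (by rw [← htnil]; exact htw_gen []) hC.2⟩
    · intro f hf
      exact ⟨iUnion_subset (fun n => (hf n).1), MeasurableSet.iUnion (fun n => (hf n).2)⟩
  have hGna : NonatomicOn μ G := by
    intro C hC hμC
    obtain ⟨n, hn⟩ := ENNReal.exists_inv_two_pow_lt hμC.ne'
    have hcover : C = ⋃ w ∈ auxLists n, C ∩ t w := by
      have hBn := tree_descend hunionT n []
      simp only [List.append_nil] at hBn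
      rw [htnil] at hBn
      ext x
      simp only [mem_iUnion, mem_inter_iff, exists_prop]
      constructor
      · intro hx
        have hxB := hC.1 hx
        rw [hBn] at hxB
        simp only [mem_iUnion, exists_prop] at hxB
        obtain ⟨w, hw, hxw⟩ := hxB
        exact ⟨w, hw, hx, hxw⟩
      · rintro ⟨w, hw, hx, _⟩; exact hx
    have hex : ∃ w ∈ auxLists n, 0 < μ (C ∩ t w) := by
      by_contra hno
      push_neg at hno
      have hz : ∀ w ∈ auxLists n, μ (C ∩ t w) = 0 := fun w hw =>
        le_antisymm (hno w hw) zero_le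
      have : μ C = 0 := by
        rw [hcover]
        exact le_antisymm
          (le_trans (measure_biUnion_finset_le _ _) (le_of_eq (Finset.sum_eq_zero hz)))
          zero_le
      exact absurd this hμC.ne'
    obtain ⟨w, hw, hpos⟩ := hex
    refine ⟨C ∩ t w, ⟨(inter_subset_left).trans hC.1, hC.2.inter (htw_gen w)⟩,
      inter_subset_left, hpos, ?_⟩
    calc μ (C ∩ t w) ≤ μ (t w) := measure_mono inter_subset_right
      _ = μ (t []) * 2⁻¹ ^ n := by
          rw [tree_measure hunionT hdisjT hmeasT heqmT w, mem_auxLists.mp hw]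
      _ ≤ 1 * 2⁻¹ ^ n := by
          gcongr
          rw [htnil]
          exact prob_le_one
      _ = 2⁻¹ ^ n := one_mul _
      _ < μ C := hn
  -- apply the hereditary narrowness of V on G
  obtain ⟨f, hsignG, hVf⟩ := hV B (hS.measurable B hBS) hμB G hGalg hGna B
    hGalg.top_mem hμB (ε / 2) (by positivity)
  obtain ⟨C₁, hC₁G, C₂, hC₂G, h₁, h₂, hdj, hun, heqμ, hfeq⟩ := hsignG
  refine ⟨f, ⟨C₁, hm' C₁ hC₁G, C₂, hm' C₂ hC₂G, h₁, h₂, hdj, hun, heqμ, hfeq⟩, ?_⟩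
  -- the norm estimate
  have hB0 : 0 < μ (t []) := by rwa [htnil]
  have hUf : ‖U f‖ ≤ ε / 2 := by
    have hfeq' : f = auxInd μ p C₁ - auxInd μ p C₂ := by
      rw [auxInd_of_meas h₁, auxInd_of_meas h₂]
      exact hfeq
    have hb1 := phi_general hunionT hdisjT hmeasT heqmT U hε'pos hsmallT hp0 hp hB0
      hC₁G.2 (by rw [htnil]; exact hC₁G.1)
    have hb2 := phi_general hunionT hdisjT hmeasT heqmT U hε'pos hsmallT hp0 hp hB0
      hC₂G.2 (by rw [htnil]; exact hC₂G.1)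
    have hμeq : (μ C₁).toReal = (μ C₂).toReal := by rw [heqμ]
    have hsplitU : U f =
        (U (auxInd μ p C₁) - ((μ C₁).toReal / (μ (t [])).toReal) • U (auxInd μ p (t []))) -
        (U (auxInd μ p C₂) - ((μ C₂).toReal / (μ (t [])).toReal) • U (auxInd μ p (t []))) := by
      rw [hfeq', map_sub, hμeq]
      abel
    rw [hsplitU]
    calc ‖(U (auxInd μ p C₁) - ((μ C₁).toReal / (μ (t [])).toReal) • U (auxInd μ p (t []))) -
        (U (auxInd μ p C₂) - ((μ C₂).toReal / (μ (t [])).toReal) • U (auxInd μ p (t [])))‖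
        ≤ ‖U (auxInd μ p C₁) - ((μ C₁).toReal / (μ (t [])).toReal) • U (auxInd μ p (t []))‖ +
          ‖U (auxInd μ p C₂) - ((μ C₂).toReal / (μ (t [])).toReal) • U (auxInd μ p (t []))‖ :=
          norm_sub_le _ _
      _ ≤ ε' + ε' := add_le_add hb1 hb2
      _ = ε / 2 := by rw [hε'def]; ring
  calc ‖(U + V) f‖ = ‖U f + V f‖ := by rw [ContinuousLinearMap.add_apply]
    _ ≤ ‖U f‖ + ‖V f‖ := norm_add_le _ _
    _ ≤ ε / 2 + ε / 2 := add_le_add hUf hVf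
    _ = ε := add_halves ε
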